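/- Let f be an onto, tops-only voting rule on the universal domain of strict preferences over a finite set X of alternatives. Then f is not obviously manipulable if and only if for every agent i, every alternative vetoed by agent i is strongly vetoed by agent i (i.e., SV_i = V_i). -/
import Mathlib

/-- A preference profile: each agent `i : Fin n` has a strict preference,
modeled as a linear order on the set of alternatives `X`. -/
abbrev Profile (n : ℕ) (X : Type*) := Fin n → LinearOrder X

/-- The top (best) alternative of a preference `L`. -/
noncomputable def top {X : Type*} [Fintype X] [Nonempty X] (L : LinearOrder X) : X :=
  @Finset.max' X L Finset.univ Finset.univ_nonempty

/-- `x` is strictly preferred to `y` according to `L`. -/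
def prefers {X : Type*} (L : LinearOrder X) (x y : X) : Prop := L.lt y x

/-- The option set left open by preference `L` of agent `i` at rule `f`. -/
def OptionSet {n : ℕ} {X : Type*} (f : Profile n X → X) (i : Fin n) (L : LinearOrder X) :
    Set X :=
  {x | ∃ P : Profile n X, P i = L ∧ f P = x}

/-- `Li'` is a profitable manipulation of `f` at (true preference) `Li` for agent `i`. -/
def IsManip {n : ℕ} {X : Type*} (f : Profile n X → X) (i : Fin n)
    (Li Li' : LinearOrder X) : Prop :=
  ∃ P : Profile n X, P i = Li ∧ prefers Li (f (Function.update P i Li')) (f P)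

/-- The worst element of `O(Li')` is strictly `Li`-preferred to the worst element of `O(Li)`.
For nonempty finite option sets this is equivalent to: some element of `O(Li)` is strictly
worse (w.r.t. `Li`) than every element of `O(Li')`. -/
def WorstImproves {n : ℕ} {X : Type*} (f : Profile n X → X) (i : Fin n)
    (Li Li' : LinearOrder X) : Prop :=
  ∃ w ∈ OptionSet f i Li, ∀ w' ∈ OptionSet f i Li', prefers Li w' w

/-- The best element of `O(Li')` is strictly `Li`-preferred to the best element of `O(Li)`.
For nonempty finite option sets this is equivalent to: some element of `O(Li')` is strictly
better (w.r.t. `Li`) than every element of `O(Li)`. -/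
def BestImproves {n : ℕ} {X : Type*} (f : Profile n X → X) (i : Fin n)
    (Li Li' : LinearOrder X) : Prop :=
  ∃ b' ∈ OptionSet f i Li', ∀ b ∈ OptionSet f i Li, prefers Li b' b

/-- `Li'` is an obvious manipulation of `f` at `Li` for agent `i`. -/
def IsObviousManip {n : ℕ} {X : Type*} (f : Profile n X → X) (i : Fin n)
    (Li Li' : LinearOrder X) : Prop :=
  IsManip f i Li Li' ∧ (WorstImproves f i Li Li' ∨ BestImproves f i Li Li')

/-- `f` is not obviously manipulable. -/
def NOM {n : ℕ} {X : Type*} (f : Profile n X → X) : Prop :=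
  ∀ (i : Fin n) (Li Li' : LinearOrder X), ¬ IsObviousManip f i Li Li'

/-- `f` is tops-only. -/
def TopsOnly {n : ℕ} {X : Type*} [Fintype X] [Nonempty X] (f : Profile n X → X) : Prop :=
  ∀ P P' : Profile n X, (∀ i, top (P i) = top (P' i)) → f P = f P'

/-- The set `V_i` of alternatives that agent `i` vetoes via some preference. -/
def VetoSet {n : ℕ} {X : Type*} (f : Profile n X → X) (i : Fin n) : Set X :=
  {x | ∃ L : LinearOrder X, x ∉ OptionSet f i L}

/-- The set `SV_i` of alternatives strongly vetoed by agent `i`: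
`x` is vetoed via `L` precisely when the top of `L` differs from `x`. -/
def StrongVetoSet {n : ℕ} {X : Type*} [Fintype X] [Nonempty X]
    (f : Profile n X → X) (i : Fin n) : Set X :=
  {x | ∀ L : LinearOrder X, x ∉ OptionSet f i L ↔ top L ≠ x}

/-- `f` is dictatorial: some agent's top alternative is always selected. -/
def Dictatorial {n : ℕ} {X : Type*} [Fintype X] [Nonempty X]
    (f : Profile n X → X) : Prop :=
  ∃ i : Fin n, ∀ P : Profile n X, f P = top (P i)

section Aux

set_option linter.unusedSectionVars false

variable {X : Type*} [Fintype X] [Nonempty X]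

lemma nom_top_is_max (L : LinearOrder X) (y : X) : L.le y (top L) :=
  @Finset.le_max' X L _ y (Finset.mem_univ y)

lemma nom_top_eq_of_max (L : LinearOrder X) (x : X) (h : ∀ y, L.le y x) : top L = x :=
  @le_antisymm X L.toPartialOrder _ _ (h _) (@Finset.le_max' X L _ x (Finset.mem_univ x))

lemma nom_lt_top (L : LinearOrder X) {x y : X} (h : top L = x) (hne : y ≠ x) : L.lt y x :=
  @lt_of_le_of_ne X L.toPartialOrder _ _ (h ▸ nom_top_is_max L y) hne

lemma nom_not_top_lt (L : LinearOrder X) (y : X) : ¬ L.lt (top L) y := fun hlt =>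
  @lt_irrefl X L.toPreorder _ (@lt_of_lt_of_le X L.toPreorder _ _ _ hlt (nom_top_is_max L y))

open Classical in
noncomputable def nomRank (t x y : X) : ℕ :=
  if y = t then Fintype.card X + 1 else if y = x then 0 else ((Fintype.equivFin X) y : ℕ) + 1

lemma nomRank_injective (t x : X) : Function.Injective (nomRank t x) := by
  classical
  intro a b h
  have ha := ((Fintype.equivFin X) a).is_lt
  have hb := ((Fintype.equivFin X) b).is_lt
  unfold nomRank at h
  split_ifs at h <;>
    first
      | (subst_vars; rfl)
      | omega
      | exact (Fintype.equivFin X).injective (Fin.ext (by omega))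

noncomputable def mkOrder (t x : X) : LinearOrder X :=
  LinearOrder.lift' (nomRank t x) (nomRank_injective t x)

lemma mkOrder_le_iff (t x a b : X) :
    (mkOrder t x).le a b ↔ nomRank t x a ≤ nomRank t x b := Iff.rfl

lemma nomRank_le (t x y : X) : nomRank t x y ≤ Fintype.card X + 1 := by
  classical
  have := ((Fintype.equivFin X) y).is_lt
  unfold nomRank
  split_ifs <;> omega

lemma nomRank_self (t x : X) : nomRank t x t = Fintype.card X + 1 := by
  classical
  unfold nomRank
  rw [if_pos rfl]

lemma mkOrder_top (t x : X) : top (mkOrder t x) = t := by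
  refine nom_top_eq_of_max _ _ fun y => ?_
  rw [mkOrder_le_iff, nomRank_self]
  exact nomRank_le t x y

lemma mkOrder_bot (t x : X) (h : t ≠ x) : ∀ y, (mkOrder t x).le x y := by
  classical
  intro y
  rw [mkOrder_le_iff]
  unfold nomRank
  rw [if_neg (Ne.symm h), if_pos rfl]
  omega

variable {n : ℕ}

lemma nom_optionSet_nonempty (f : Profile n X → X) (i : Fin n) (L : LinearOrder X) :
    ∃ y, y ∈ OptionSet f i L :=
  ⟨f (fun _ => L), ⟨fun _ => L, rfl, rfl⟩⟩

lemma nom_optionSet_congr (f : Profile n X → X) (htops : TopsOnly f) (i : Fin n)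
    {L L' : LinearOrder X} (h : top L = top L') : OptionSet f i L = OptionSet f i L' := by
  have key : ∀ L L' : LinearOrder X, top L = top L' →
      OptionSet f i L ⊆ OptionSet f i L' := by
    rintro L L' h x ⟨P, hPi, rfl⟩
    refine ⟨Function.update P i L', Function.update_self .., (htops _ _ ?_).symm⟩
    intro j
    by_cases hj : j = i
    · subst hj
      rw [Function.update_self, hPi, h]
    · rw [Function.update_of_ne hj]
  exact Set.Subset.antisymm (key L L' h) (key L' L h.symm)

/-- Under NOM, when `x` is the top of `L`, it belongs to the option set at `L`. -/
lemma nom_mem_option_of_top (f : Profile n X → X) (honto : Function.Surjective f)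
    (hnom : NOM f) (i : Fin n) (x : X) (L : LinearOrder X) (h : top L = x) :
    x ∈ OptionSet f i L := by
  by_contra hx
  obtain ⟨Pstar, hPstar⟩ := honto x
  refine hnom i L (Pstar i) ⟨?_, Or.inr ?_⟩
  · refine ⟨Function.update Pstar i L, Function.update_self .., ?_⟩
    have h1 : Function.update (Function.update Pstar i L) i (Pstar i) = Pstar := by
      rw [Function.update_idem]
      exact Function.update_eq_self i Pstar
    rw [h1, hPstar]
    have hf : f (Function.update Pstar i L) ∈ OptionSet f i L :=
      ⟨_, Function.update_self .., rfl⟩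
    exact nom_lt_top L h (fun he => hx (he ▸ hf))
  · exact ⟨x, ⟨Pstar, rfl, hPstar⟩, fun b hb => nom_lt_top L h (fun he => hx (he ▸ hb))⟩

end Aux

/-- An onto tops-only rule is NOM iff every veto is a strong veto (`SV_i = V_i` for all `i`). -/
theorem main_theorem {n : ℕ} {X : Type*} [Fintype X] [Nonempty X]
    (hn : 2 ≤ n) (hX : 2 ≤ Fintype.card X)
    (f : Profile n X → X) (honto : Function.Surjective f) (htops : TopsOnly f) :
    NOM f ↔ ∀ i : Fin n, StrongVetoSet f i = VetoSet f i := by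
  have hnt : Nontrivial X := Fintype.one_lt_card_iff_nontrivial.mp hX
  constructor
  · -- NOM → SV = V
    intro hnom i
    ext x
    simp only [StrongVetoSet, VetoSet, Set.mem_setOf_eq]
    constructor
    · -- SV ⊆ V
      intro hsv
      obtain ⟨y, hy⟩ := exists_ne x
      exact ⟨mkOrder y x, (hsv _).mpr (by rw [mkOrder_top]; exact hy)⟩
    · -- V ⊆ SV
      rintro ⟨Lbar, hLbar⟩ L
      by_cases hL : top L = x
      · exact iff_of_false (not_not_intro (nom_mem_option_of_top f honto hnom i x L hL))
          (not_not_intro hL)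
      · refine iff_of_true ?_ hL
        intro hxL
        set Li := mkOrder (top L) x with hLi
        have htopLi : top Li = top L := mkOrder_top _ _
        have hbot : ∀ y, Li.le x y := mkOrder_bot _ _ hL
        have hbotlt : ∀ y, y ≠ x → Li.lt x y := fun y hy =>
          @lt_of_le_of_ne X Li.toPartialOrder _ _ (hbot y) (Ne.symm hy)
        have hOLi : OptionSet f i Li = OptionSet f i L :=
          nom_optionSet_congr f htops i htopLi
        obtain ⟨P0, hP0i, hP0⟩ := hxL
        set P := Function.update P0 i Li with hP
        have hPi : P i = Li := Function.update_self ..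
        have hfP : f P = x := by
          rw [← hP0]
          refine htops _ _ fun j => ?_
          by_cases hj : j = i
          · subst hj
            rw [hP, Function.update_self, hP0i, htopLi]
          · rw [hP, Function.update_of_ne hj]
        -- x ∉ O(Lbar)
        have hxbar : ∀ w', w' ∈ OptionSet f i Lbar → w' ≠ x := fun w' hw' he =>
          hLbar (he ▸ hw')
        refine hnom i Li Lbar ⟨⟨P, hPi, ?_⟩, Or.inl ?_⟩
        · rw [hfP]
          have hy : f (Function.update P i Lbar) ∈ OptionSet f i Lbar :=
            ⟨_, Function.update_self .., rfl⟩
          exact hbotlt _ (hxbar _ hy)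
        · refine ⟨x, ?_, fun w' hw' => hbotlt _ (hxbar _ hw')⟩
          rw [hOLi]
          exact ⟨P0, hP0i, hP0⟩
  · -- SV = V → NOM
    rintro hv i Li Li' ⟨-, himp⟩
    have hchar : ∀ (y : X) (L : LinearOrder X),
        y ∉ VetoSet f i → y ∈ OptionSet f i L := by
      intro y L hy
      by_contra hmem
      exact hy ⟨L, hmem⟩
    have hcharV : ∀ (y : X) (L : LinearOrder X), y ∈ VetoSet f i →
        (y ∉ OptionSet f i L ↔ top L ≠ y) := by
      intro y L hy
      rw [← hv i] at hy
      exact hy L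
    have htopmem : top Li ∈ OptionSet f i Li := by
      by_cases hV : top Li ∈ VetoSet f i
      · by_contra hmem
        exact ((hcharV _ _ hV).mp hmem) rfl
      · exact hchar _ _ hV
    rcases himp with ⟨w, hw, hall⟩ | ⟨b', hb', hall⟩
    · by_cases hwV : w ∈ VetoSet f i
      · have hweq : top Li = w := by
          by_contra hne
          exact ((hcharV _ _ hwV).mpr hne) hw
        obtain ⟨w', hw'⟩ := nom_optionSet_nonempty f i Li'
        exact nom_not_top_lt Li w' (hweq ▸ hall w' hw')
      · exact @lt_irrefl X Li.toPreorder w (hall w (hchar _ _ hwV))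
    · exact nom_not_top_lt Li b' (hall (top Li) htopmem)
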